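/- Under the stated setup, for every f ∈ A and every multi-index α ∈ ℕ^n, the element f_α lies in the k-linear span of the set {(D_{i_1} ∘ ⋯ ∘ D_{i_m})(f) : m ≥ 0, i_1,…,i_m ∈ {1,…,n}} (where the empty composite is f itself). -/

import Mathlib

open TensorProduct

noncomputable section
set_option maxHeartbeats 1000000
set_option synthInstance.maxHeartbeats 200000

variable {k : Type*} [Field k] {n : ℕ}
variable {A : Type*} [CommRing A] [Algebra k A]

/-- The coefficient-extraction linear map `k[u₁,…,u_n] → k`. -/
def lcoeffMv (k : Type*) [CommSemiring k] {n : ℕ} (β : Fin n →₀ ℕ) :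
    MvPolynomial (Fin n) k →ₗ[k] k where
  toFun p := MvPolynomial.coeff β p
  map_add' p q := MvPolynomial.coeff_add β p q
  map_smul' c p := by simp [MvPolynomial.coeff_smul]

/-- Evaluation at `u = 0`, a `k`-algebra map `k[u₁,…,u_n] → k`. -/
def evalZero (k : Type*) [CommSemiring k] (n : ℕ) : MvPolynomial (Fin n) k →ₐ[k] k :=
  MvPolynomial.aeval 0

/-- Extraction of the coefficient of `u^α` in the first tensor factor:
for `φ(f) = Σ_α u^α ⊗ f_α`, this sends `φ(f)` to `f_α`. -/
def coeffFst (k : Type*) [Field k] {n : ℕ} (A : Type*) [CommRing A] [Algebra k A]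
    (α : Fin n →₀ ℕ) : (MvPolynomial (Fin n) k ⊗[k] A) →ₗ[k] A :=
  (TensorProduct.lid k A).toLinearMap ∘ₗ TensorProduct.map (lcoeffMv k α) LinearMap.id

/-- The operator `D_i : A → A`, `f ↦ f_{e_i}`. -/
def Dop (φ : A →ₐ[k] MvPolynomial (Fin n) k ⊗[k] A) (i : Fin n) (f : A) : A :=
  coeffFst k A (Finsupp.single i 1) (φ f)


namespace St17Aux

open MvPolynomial

/-! ### Degrees of multi-indices -/

/-- degree of a multi-index -/
def degS {n : ℕ} (d : Fin n →₀ ℕ) : ℕ := d.sum fun _ m => m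

lemma degS_add {n : ℕ} (a b : Fin n →₀ ℕ) : degS (a + b) = degS a + degS b :=
  Finsupp.sum_add_index' (fun _ => rfl) (fun _ _ _ => rfl)

lemma degS_single {n : ℕ} (j : Fin n) (m : ℕ) : degS (Finsupp.single j m) = m :=
  Finsupp.sum_single_index rfl

lemma degS_eq_zero {n : ℕ} {d : Fin n →₀ ℕ} (h : degS d = 0) : d = 0 := by
  ext a
  by_contra ha
  have ha' : d a ≠ 0 := by simpa using ha
  have h1 : a ∈ d.support := Finsupp.mem_support_iff.2 ha'
  have h2 : d a ≤ degS d := Finset.single_le_sum (f := fun i => d i) (fun _ _ => Nat.zero_le _) h1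
  omega

lemma exists_step {n : ℕ} {γ : Fin n →₀ ℕ} (h : γ ≠ 0) :
    ∃ (j : Fin n) (γ' : Fin n →₀ ℕ), γ = γ' + Finsupp.single j 1 ∧ degS γ = degS γ' + 1 := by
  have hs : γ.support.Nonempty := Finsupp.support_nonempty_iff.2 h
  obtain ⟨j, hj⟩ := hs
  have hj1 : 1 ≤ γ j := Nat.one_le_iff_ne_zero.2 (Finsupp.mem_support_iff.1 hj)
  have heq : γ = (γ - Finsupp.single j 1) + Finsupp.single j 1 := by
    ext a
    simp only [Finsupp.add_apply, Finsupp.tsub_apply, Finsupp.single_apply]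
    by_cases hja : j = a
    · subst hja; simp; omega
    · simp [hja]
  refine ⟨j, γ - Finsupp.single j 1, heq, ?_⟩
  rw [show degS γ = degS ((γ - Finsupp.single j 1) + Finsupp.single j 1) from by rw [← heq],
    degS_add, degS_single]

/-! ### Minimal degree of polynomials -/

section MinDeg

variable {n : ℕ} {R : Type*} [CommSemiring R]

/-- All monomials of `p` have degree at least `m`. -/
def MinDeg (m : ℕ) (p : MvPolynomial (Fin n) R) : Prop :=
  ∀ d ∈ p.support, m ≤ degS d

lemma minDeg_coeff {m : ℕ} {p : MvPolynomial (Fin n) R} (h : MinDeg m p)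
    {d : Fin n →₀ ℕ} (hd : degS d < m) : coeff d p = 0 := by
  by_contra hc
  exact absurd (h d (MvPolynomial.mem_support_iff.2 hc)) (by omega)

lemma minDeg_of_coeff (m : ℕ) (p : MvPolynomial (Fin n) R)
    (h : ∀ d, degS d < m → coeff d p = 0) : MinDeg m p := by
  intro d hd
  by_contra hc
  exact (MvPolynomial.mem_support_iff.1 hd) (h d (by omega))

lemma minDeg_add {m : ℕ} {p q : MvPolynomial (Fin n) R} (hp : MinDeg m p) (hq : MinDeg m q) :
    MinDeg m (p + q) := by
  refine minDeg_of_coeff _ _ fun d hd => ?_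
  rw [coeff_add, minDeg_coeff hp hd, minDeg_coeff hq hd, add_zero]

lemma minDeg_mul {a b : ℕ} {p q : MvPolynomial (Fin n) R} (hp : MinDeg a p) (hq : MinDeg b q) :
    MinDeg (a + b) (p * q) := by
  refine minDeg_of_coeff _ _ fun d hd => ?_
  rw [coeff_mul]
  refine Finset.sum_eq_zero fun x hx => ?_
  have rfl' : x.1 + x.2 = d := Finset.HasAntidiagonal.mem_antidiagonal.1 hx
  by_cases h1 : degS x.1 < a
  · rw [minDeg_coeff hp h1, zero_mul]
  · have h2 : degS x.2 < b := by
      have := degS_add x.1 x.2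
      rw [rfl'] at this; omega
    rw [minDeg_coeff hq h2, mul_zero]

lemma minDeg_monomial (e : Fin n →₀ ℕ) (c : R) : MinDeg (degS e) (monomial e c) := by
  intro d hd
  have h := MvPolynomial.support_monomial_subset hd
  simp only [Finset.mem_singleton] at h
  subst h; exact le_refl _

lemma constantCoeff_pderiv (i : Fin n) (T : MvPolynomial (Fin n) R) :
    constantCoeff (pderiv i T) = coeff (Finsupp.single i 1) T := by
  induction T using MvPolynomial.induction_on' with
  | monomial d c =>
    rw [pderiv_monomial]
    rw [coeff_monomial]
    rw [show (constantCoeff (monomial (d - Finsupp.single i 1) (c * d i)) : R)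
      = coeff 0 (monomial (d - Finsupp.single i 1) (c * d i)) from rfl, coeff_monomial]
    by_cases hd : d = Finsupp.single i 1
    · subst hd; simp
    · rw [if_neg hd]
      by_cases h0 : d - Finsupp.single i 1 = 0
      · rw [if_pos h0]
        have hdi : d i = 0 := by
          by_contra hne
          apply hd
          ext a
          have := DFunLike.congr_fun h0 a
          simp only [Finsupp.tsub_apply, Finsupp.single_apply, Finsupp.coe_zero,
            Pi.zero_apply] at this
          simp only [Finsupp.single_apply]
          by_cases hia : i = a
          · subst hia
            simp only [eq_self_iff_true, if_true] at this ⊢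
            omega
          · simp only [if_neg hia] at this ⊢; omega
        rw [hdi]; simp
      · rw [if_neg h0]
  | add p q hp hq => simp [hp, hq, map_add, coeff_add]

end MinDeg

/-! ### The equivalence `H ⊗ H ≃ MvPolynomial (Fin n) H` and bridges -/

variable {k : Type*} [Field k] {n : ℕ}

local notation "H" => MvPolynomial (Fin n) k

@[simp] lemma lcoeffMv_apply (β : Fin n →₀ ℕ) (p : H) :
    lcoeffMv k β p = coeff β p := rfl

/-- abbreviation for the algebra equivalence `H ⊗ H ≃ MvPolynomial (Fin n) H` -/
def Ψ : (H ⊗[k] H) ≃ₐ[k] MvPolynomial (Fin n) H :=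
  (Algebra.TensorProduct.comm k H H).trans
    ((MvPolynomial.algebraTensorAlgEquiv k H).restrictScalars k)

lemma psi_coeff (p q : H) (d : Fin n →₀ ℕ) :
    coeff d ((Ψ (k := k) (n := n)) (p ⊗ₜ[k] q)) = coeff d p • q := by
  show coeff d ((MvPolynomial.algebraTensorAlgEquiv k H) (q ⊗ₜ[k] p)) = _
  rw [MvPolynomial.algebraTensorAlgEquiv_tmul, coeff_smul, coeff_map, smul_eq_mul,
    Algebra.algebraMap_eq_smul_one, mul_smul_comm, mul_one]

lemma bridgeB (γ β : Fin n →₀ ℕ) (t : H ⊗[k] H) :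
    TensorProduct.lid k k (TensorProduct.map (lcoeffMv k γ) (lcoeffMv k β) t)
      = coeff β (coeff γ ((Ψ (k := k) (n := n)) t)) := by
  induction t with
  | zero => simp
  | tmul p q =>
    rw [TensorProduct.map_tmul, TensorProduct.lid_tmul, psi_coeff]
    simp [MvPolynomial.coeff_smul, smul_eq_mul, mul_comm]
  | add x y hx hy =>
    rw [map_add, map_add, hx, hy, map_add]
    rw [show coeff γ ((Ψ (k := k) (n := n)) x + (Ψ (k := k) (n := n)) y) = coeff γ ((Ψ (k := k) (n := n)) x) + coeff γ ((Ψ (k := k) (n := n)) y) from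
      coeff_add _ _ _, coeff_add]

lemma bridgeT1 (t : H ⊗[k] H) :
    constantCoeff ((Ψ (k := k) (n := n)) t)
      = Algebra.TensorProduct.lid k H
          (Algebra.TensorProduct.map (evalZero k n) (AlgHom.id k H) t) := by
  induction t with
  | zero => simp
  | tmul p q =>
    rw [show (constantCoeff ((Ψ (k := k) (n := n)) (p ⊗ₜ[k] q)) : H)
      = coeff 0 ((Ψ (k := k) (n := n)) (p ⊗ₜ[k] q)) from rfl, psi_coeff]
    rw [Algebra.TensorProduct.map_tmul, Algebra.TensorProduct.lid_tmul]
    have : evalZero k n p = coeff 0 p := by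
      rw [evalZero, MvPolynomial.aeval_zero]
      simp [MvPolynomial.constantCoeff_eq]
    rw [this]
    rfl
  | add x y hx hy => simp only [map_add, hx, hy]

lemma bridgeT2 (t : H ⊗[k] H) :
    MvPolynomial.map (evalZero k n).toRingHom ((Ψ (k := k) (n := n)) t)
      = Algebra.TensorProduct.rid k k H
          (Algebra.TensorProduct.map (AlgHom.id k H) (evalZero k n) t) := by
  induction t with
  | zero => simp
  | tmul p q =>
    rw [Algebra.TensorProduct.map_tmul, Algebra.TensorProduct.rid_tmul]
    ext d
    rw [coeff_map, psi_coeff]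
    rw [MvPolynomial.coeff_smul]
    simp only [AlgHom.toRingHom_eq_coe, RingHom.coe_coe, AlgHom.coe_id, id_eq]
    rw [map_smul]
    simp [smul_eq_mul, mul_comm]
  | add x y hx hy => simp only [map_add, hx, hy]

/-! ### The structure of `Λᵢ (ν (u^γ))` -/

section Nu

variable (ν : MvPolynomial (Fin n) k →ₐ[k] MvPolynomial (Fin n) (MvPolynomial (Fin n) k))

/-- `Λᵢ T = constantCoeff (∂ᵢ T)`, extraction of the coefficient of `Xᵢ`. -/
def Lam (i : Fin n) (T : MvPolynomial (Fin n) H) : H := constantCoeff (pderiv i T)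

lemma Lam_mul (i : Fin n) (T S : MvPolynomial (Fin n) H) :
    Lam i (T * S) = Lam i T * constantCoeff S + constantCoeff T * Lam i S := by
  rw [Lam, Lam, Lam, pderiv_mul, map_add, map_mul, map_mul]

lemma F_decomp (hν1 : ∀ p : H, constantCoeff (ν p) = p)
    (i : Fin n)
    (hq0 : ∀ j : Fin n, coeff 0 (Lam i (ν (X j))) = if i = j then 1 else 0) :
    ∀ (m : ℕ) (γ : Fin n →₀ ℕ), degS γ = m →
      ∃ r : H, MinDeg (degS γ) r ∧
        Lam i (ν (monomial γ (1 : k)))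
          = ((γ i : k)) • monomial (γ - Finsupp.single i 1) (1 : k) + r := by
  intro m
  induction m using Nat.strong_induction_on with
  | _ m ih =>
    intro γ hγ
    by_cases h0 : γ = 0
    · subst h0
      refine ⟨0, fun d hd => by simp at hd, ?_⟩
      rw [show (monomial (0 : Fin n →₀ ℕ) (1 : k)) = 1 from by
        rw [MvPolynomial.monomial_zero', MvPolynomial.C_1], map_one]
      simp [Lam, pderiv_one]
    · obtain ⟨j, γ', hsplit, hdeg⟩ := exists_step h0
      have hγ'm : degS γ' = m - 1 := by omega
      have hlt : m - 1 < m := by omega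
      obtain ⟨r', hr', hF'⟩ := ih (m - 1) hlt γ' hγ'm
      -- multiplicativity
      have hmul : ν (monomial γ (1 : k)) = ν (monomial γ' 1) * ν (X j) := by
        rw [← map_mul]
        congr 1
        rw [show (X j : H) = monomial (Finsupp.single j 1) 1 from rfl,
          MvPolynomial.monomial_mul, hsplit, one_mul]
      have hq'min : MinDeg 1 (Lam i (ν (X j)) - MvPolynomial.C (if i = j then 1 else 0)) := by
        refine minDeg_of_coeff _ _ fun d hd => ?_
        have hd0 : d = 0 := degS_eq_zero (by omega)
        subst hd0
        rw [MvPolynomial.coeff_sub, hq0 j, MvPolynomial.coeff_C]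
        simp
      set q' : H := Lam i (ν (X j)) - MvPolynomial.C (if i = j then 1 else 0) with hq'
      have hqeq : Lam i (ν (X j)) = MvPolynomial.C (if i = j then 1 else 0) + q' := by
        rw [hq']; ring
      have hccX : constantCoeff (ν (X j)) = (X j : H) := hν1 _
      have hccM : constantCoeff (ν (monomial γ' (1 : k))) = monomial γ' (1 : k) := hν1 _
      rw [hmul, Lam_mul, hF', hccX, hccM, hqeq]
      refine ⟨r' * X j + monomial γ' (1 : k) * q', ?_, ?_⟩
      · rw [hdeg]
        have hXmin : MinDeg 1 (X j : H) := by
          have := minDeg_monomial (Finsupp.single j 1) (1 : k)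
          rw [degS_single] at this
          exact this
        exact minDeg_add (minDeg_mul hr' hXmin)
          (minDeg_mul (minDeg_monomial γ' (1 : k)) hq'min)
      · -- algebraic identity
        have hXj : (X j : H) = monomial (Finsupp.single j 1) 1 := rfl
        by_cases hij : i = j
        · subst hij
          have hγi : γ i = γ' i + 1 := by
            rw [hsplit]; simp [Finsupp.add_apply, Finsupp.single_apply]
          have hγsub : γ - Finsupp.single i 1 = γ' := by
            rw [hsplit]; exact add_tsub_cancel_right _ _
          have hmm : ((γ' i : k)) • ((monomial (γ' - Finsupp.single i 1) (1 : k)) * X i)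
              = ((γ' i : k)) • monomial γ' (1 : k) := by
            by_cases hzi : γ' i = 0
            · simp [hzi]
            · have hexp : γ' - Finsupp.single i 1 + Finsupp.single i 1 = γ' := by
                ext a
                simp only [Finsupp.add_apply, Finsupp.tsub_apply, Finsupp.single_apply]
                by_cases hia : i = a
                · subst hia; simp only [eq_self_iff_true, if_true]; omega
                · simp [hia]
              rw [hXj, MvPolynomial.monomial_mul, one_mul, hexp]
          rw [if_pos rfl, hγi, hγsub]
          rw [add_mul, smul_mul_assoc, hmm]
          rw [mul_add, MvPolynomial.C_1, mul_one]
          push_cast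
          rw [add_smul, one_smul]
          ring
        · have hγi : γ i = γ' i := by
            rw [hsplit]; simp [Finsupp.add_apply, Finsupp.single_apply, Ne.symm hij]
          have hγsub : γ - Finsupp.single i 1
              = (γ' - Finsupp.single i 1) + Finsupp.single j 1 := by
            ext a
            rw [hsplit]
            simp only [Finsupp.add_apply, Finsupp.tsub_apply, Finsupp.single_apply]
            by_cases hia : i = a
            · subst hia; rw [if_pos rfl, if_neg (show ¬ j = i from fun h => hij h.symm)]; omega
            · simp [hia]
          rw [if_neg hij, MvPolynomial.C_0, zero_add]
          rw [add_mul, smul_mul_assoc]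
          rw [hγi, hγsub]
          rw [hXj, MvPolynomial.monomial_mul, one_mul]
          ring

lemma key_coeff (hν1 : ∀ p : H, constantCoeff (ν p) = p)
    (i : Fin n)
    (hq0 : ∀ j : Fin n, coeff 0 (Lam i (ν (X j))) = if i = j then 1 else 0)
    (β γ : Fin n →₀ ℕ) (hd : degS β + 1 ≤ degS γ) :
    coeff β (Lam i (ν (monomial γ (1 : k))))
      = if γ = β + Finsupp.single i 1 then ((β i : k) + 1) else 0 := by
  obtain ⟨r, hrmin, hF⟩ := F_decomp ν hν1 i hq0 (degS γ) γ rfl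
  rw [hF, coeff_add, minDeg_coeff hrmin (by omega), add_zero]
  rw [MvPolynomial.coeff_smul, MvPolynomial.coeff_monomial]
  by_cases hg : γ = β + Finsupp.single i 1
  · subst hg
    have h1 : (β + Finsupp.single i 1) - Finsupp.single i 1 = β := add_tsub_cancel_right _ _
    have h2 : ((β + Finsupp.single i 1 : Fin n →₀ ℕ)) i = β i + 1 := by
      simp [Finsupp.add_apply, Finsupp.single_apply]
    rw [if_pos rfl, h1, if_pos rfl, h2]
    push_cast
    simp [smul_eq_mul]
  · rw [if_neg hg]
    by_cases hzi : γ i = 0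
    · rw [hzi]; simp
    · have : ¬ (γ - Finsupp.single i 1 = β) := by
        intro hc
        apply hg
        rw [← hc]
        ext a
        simp only [Finsupp.add_apply, Finsupp.tsub_apply, Finsupp.single_apply]
        by_cases hia : i = a
        · subst hia; simp; omega
        · simp [hia]
      rw [if_neg this]
      simp

end Nu

/-! ### Lemmas about `coeffFst` and the coaction -/

section Main

variable {A : Type*} [CommRing A] [Algebra k A]

lemma coeffFst_tmul (α : Fin n →₀ ℕ) (p : H) (a : A) :
    coeffFst k A α (p ⊗ₜ[k] a) = coeff α p • a := by
  simp [coeffFst]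

lemma evalZero_eq_coeff_zero (p : H) : evalZero k n p = coeff 0 p := by
  rw [evalZero, MvPolynomial.aeval_zero]
  simp [MvPolynomial.constantCoeff_eq]

lemma coeffFst_zero_eq (t : MvPolynomial (Fin n) k ⊗[k] A) :
    coeffFst k A 0 t
      = Algebra.TensorProduct.lid k A
          (Algebra.TensorProduct.map (evalZero k n) (AlgHom.id k A) t) := by
  induction t with
  | zero => simp
  | tmul p a =>
    rw [coeffFst_tmul, Algebra.TensorProduct.map_tmul, Algebra.TensorProduct.lid_tmul,
      evalZero_eq_coeff_zero]
    rfl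
  | add x y hx hy => simp only [map_add, hx, hy]

lemma expand (t : MvPolynomial (Fin n) k ⊗[k] A) :
    ∃ S : Finset (Fin n →₀ ℕ),
      (∀ γ, γ ∉ S → coeffFst k A γ t = 0) ∧
      ∀ L : MvPolynomial (Fin n) k →ₗ[k] k,
        TensorProduct.lid k A (TensorProduct.map L LinearMap.id t)
          = ∑ γ ∈ S, L (monomial γ 1) • coeffFst k A γ t := by
  induction t with
  | zero => exact ⟨∅, fun γ _ => by simp, fun L => by simp⟩
  | tmul p a =>
    refine ⟨p.support, fun γ hγ => ?_, fun L => ?_⟩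
    · rw [coeffFst_tmul, MvPolynomial.notMem_support_iff.1 hγ, zero_smul]
    · rw [TensorProduct.map_tmul, TensorProduct.lid_tmul]
      conv_lhs => rw [MvPolynomial.as_sum p]
      rw [map_sum, Finset.sum_smul]
      refine Finset.sum_congr rfl fun γ hγ => ?_
      have hmono : (monomial γ) (coeff γ p) = coeff γ p • monomial γ (1 : k) := by
        rw [MvPolynomial.smul_monomial, smul_eq_mul, mul_one]
      rw [hmono, map_smul, coeffFst_tmul, smul_smul, smul_eq_mul, mul_comm]
      rw [LinearMap.id_coe, id_eq]
  | add x y hx hy =>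
    obtain ⟨S1, h10, h1L⟩ := hx
    obtain ⟨S2, h20, h2L⟩ := hy
    refine ⟨S1 ∪ S2, fun γ hγ => ?_, fun L => ?_⟩
    · rw [map_add, h10 γ (fun h => hγ (Finset.mem_union_left _ h)),
        h20 γ (fun h => hγ (Finset.mem_union_right _ h)), add_zero]
    · rw [map_add, map_add, h1L L, h2L L]
      have e1 : ∑ γ ∈ S1, L (monomial γ 1) • coeffFst k A γ x
          = ∑ γ ∈ S1 ∪ S2, L (monomial γ 1) • coeffFst k A γ x :=
        Finset.sum_subset Finset.subset_union_left
          (fun γ _ hγ => by rw [h10 γ hγ, smul_zero])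
      have e2 : ∑ γ ∈ S2, L (monomial γ 1) • coeffFst k A γ y
          = ∑ γ ∈ S1 ∪ S2, L (monomial γ 1) • coeffFst k A γ y :=
        Finset.sum_subset Finset.subset_union_right
          (fun γ _ hγ => by rw [h20 γ hγ, smul_zero])
      rw [e1, e2, ← Finset.sum_add_distrib]
      refine Finset.sum_congr rfl fun γ _ => ?_
      rw [map_add, smul_add]

/-- The linear functional `p ↦ (coefficient of u^{eᵢ} ⊗ u^β in μ p)`. -/
def Phi (μ : MvPolynomial (Fin n) k →ₐ[k] MvPolynomial (Fin n) k ⊗[k] MvPolynomial (Fin n) k)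
    (i : Fin n) (β : Fin n →₀ ℕ) : MvPolynomial (Fin n) k →ₗ[k] k :=
  (TensorProduct.lid k k).toLinearMap ∘ₗ
    (TensorProduct.map (lcoeffMv k (Finsupp.single i 1)) (lcoeffMv k β)) ∘ₗ μ.toLinearMap

lemma ER (φ : A →ₐ[k] MvPolynomial (Fin n) k ⊗[k] A) (i : Fin n) (β : Fin n →₀ ℕ)
    (t : MvPolynomial (Fin n) k ⊗[k] A) :
    ((TensorProduct.lid k A).toLinearMap ∘ₗ
        TensorProduct.map (lcoeffMv k (Finsupp.single i 1)) (coeffFst k A β))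
      (Algebra.TensorProduct.map (AlgHom.id k H) φ t)
    = coeffFst k A β (φ (coeffFst k A (Finsupp.single i 1) t)) := by
  induction t with
  | zero => simp
  | tmul p a =>
    rw [Algebra.TensorProduct.map_tmul]
    simp only [LinearMap.coe_comp, Function.comp_apply, TensorProduct.map_tmul,
      LinearEquiv.coe_coe, TensorProduct.lid_tmul, lcoeffMv_apply, AlgHom.coe_id, id_eq]
    rw [coeffFst_tmul, map_smul, map_smul]
  | add x y hx hy => simp only [map_add, hx, hy]

lemma ELinner (i : Fin n) (β : Fin n →₀ ℕ)
    (T : MvPolynomial (Fin n) k ⊗[k] MvPolynomial (Fin n) k) (a : A) :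
    ((TensorProduct.lid k A).toLinearMap ∘ₗ
        TensorProduct.map (lcoeffMv k (Finsupp.single i 1)) (coeffFst k A β))
      (Algebra.TensorProduct.assoc k k k H H A (T ⊗ₜ[k] a))
    = (TensorProduct.lid k k
        (TensorProduct.map (lcoeffMv k (Finsupp.single i 1)) (lcoeffMv k β) T)) • a := by
  induction T with
  | zero => rw [TensorProduct.zero_tmul]; simp
  | tmul q r =>
    rw [Algebra.TensorProduct.assoc_tmul]
    simp only [LinearMap.coe_comp, Function.comp_apply, TensorProduct.map_tmul,
      LinearEquiv.coe_coe, TensorProduct.lid_tmul, lcoeffMv_apply]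
    rw [coeffFst_tmul, smul_smul, smul_eq_mul]
  | add x y hx hy =>
    rw [TensorProduct.add_tmul, map_add, map_add, hx, hy, map_add, map_add, add_smul]

lemma EL (μ : MvPolynomial (Fin n) k →ₐ[k] MvPolynomial (Fin n) k ⊗[k] MvPolynomial (Fin n) k)
    (i : Fin n) (β : Fin n →₀ ℕ) (t : MvPolynomial (Fin n) k ⊗[k] A) :
    ((TensorProduct.lid k A).toLinearMap ∘ₗ
        TensorProduct.map (lcoeffMv k (Finsupp.single i 1)) (coeffFst k A β))
      (Algebra.TensorProduct.assoc k k k H H A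
        (Algebra.TensorProduct.map μ (AlgHom.id k A) t))
    = TensorProduct.lid k A (TensorProduct.map (Phi μ i β) LinearMap.id t) := by
  induction t with
  | zero => simp
  | tmul p a =>
    rw [Algebra.TensorProduct.map_tmul, AlgHom.coe_id, id_eq, ELinner]
    rw [TensorProduct.map_tmul, TensorProduct.lid_tmul]
    rfl
  | add x y hx hy => simp only [map_add, hx, hy]

end Main

end St17Aux

open St17Aux in
/-- For every `f ∈ A` and every multi-index `α`, the
coefficient `f_α` lies in the `k`-linear span of the iterated composites
`(D_{i_1} ∘ ⋯ ∘ D_{i_m})(f)`. -/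
theorem statement17 [CharZero k]
    (μ : MvPolynomial (Fin n) k →ₐ[k] MvPolynomial (Fin n) k ⊗[k] MvPolynomial (Fin n) k)
    (hμ1 : ∀ p : MvPolynomial (Fin n) k,
      Algebra.TensorProduct.lid k (MvPolynomial (Fin n) k)
        (Algebra.TensorProduct.map (evalZero k n) (AlgHom.id k (MvPolynomial (Fin n) k)) (μ p)) = p)
    (hμ2 : ∀ p : MvPolynomial (Fin n) k,
      Algebra.TensorProduct.rid k k (MvPolynomial (Fin n) k)
        (Algebra.TensorProduct.map (AlgHom.id k (MvPolynomial (Fin n) k)) (evalZero k n) (μ p)) = p)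
    (φ : A →ₐ[k] MvPolynomial (Fin n) k ⊗[k] A)
    (hφ1 : ∀ f : A,
      Algebra.TensorProduct.lid k A
        (Algebra.TensorProduct.map (evalZero k n) (AlgHom.id k A) (φ f)) = f)
    (hφ2 : ∀ f : A,
      Algebra.TensorProduct.assoc k k k (MvPolynomial (Fin n) k) (MvPolynomial (Fin n) k) A
          (Algebra.TensorProduct.map μ (AlgHom.id k A) (φ f)) =
        Algebra.TensorProduct.map (AlgHom.id k (MvPolynomial (Fin n) k)) φ (φ f))
    (f : A) (α : Fin n →₀ ℕ) :
    coeffFst k A α (φ f) ∈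
      Submodule.span k {g : A | ∃ l : List (Fin n), g = l.foldr (fun i x => Dop φ i x) f} := by
    classical
  set SP := Submodule.span k {g : A | ∃ l : List (Fin n), g = l.foldr (fun i x => Dop φ i x) f}
    with hSP
  -- the comultiplication, as a map to `MvPolynomial (Fin n) (MvPolynomial (Fin n) k)`
  set ν : MvPolynomial (Fin n) k →ₐ[k] MvPolynomial (Fin n) (MvPolynomial (Fin n) k) :=
    ((Ψ (k := k) (n := n)) : (MvPolynomial (Fin n) k ⊗[k] MvPolynomial (Fin n) k) ≃ₐ[k]
        MvPolynomial (Fin n) (MvPolynomial (Fin n) k)).toAlgHom.comp μ with hν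
  have hνapp : ∀ p, ν p = (Ψ (k := k) (n := n)) (μ p) := fun p => rfl
  have hν1 : ∀ p, MvPolynomial.constantCoeff (ν p) = p := fun p => by
    rw [hνapp, bridgeT1]; exact hμ1 p
  have hq0 : ∀ i j : Fin n, MvPolynomial.coeff 0 (Lam i (ν (MvPolynomial.X j)))
      = if i = j then 1 else 0 := by
    intro i j
    have h2 : MvPolynomial.map (evalZero k n).toRingHom ((Ψ (k := k) (n := n)) (μ (MvPolynomial.X j)))
        = MvPolynomial.X j := by
      rw [bridgeT2]; exact hμ2 _
    have h3 := congrArg (MvPolynomial.coeff (Finsupp.single i 1)) h2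
    rw [MvPolynomial.coeff_map] at h3
    rw [Lam, constantCoeff_pderiv, hνapp]
    have h4 : (evalZero k n).toRingHom
        (MvPolynomial.coeff (Finsupp.single i 1) ((Ψ (k := k) (n := n)) (μ (MvPolynomial.X j))))
        = MvPolynomial.coeff 0
          (MvPolynomial.coeff (Finsupp.single i 1) ((Ψ (k := k) (n := n)) (μ (MvPolynomial.X j)))) := by
      rw [show ((evalZero k n).toRingHom : MvPolynomial (Fin n) k → k)
          = (evalZero k n : MvPolynomial (Fin n) k → k) from rfl]
      exact evalZero_eq_coeff_zero _
    rw [h4] at h3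
    rw [h3, MvPolynomial.coeff_X']
    by_cases hij : i = j
    · subst hij; simp
    · rw [if_neg (fun h => hij ((Finsupp.single_left_inj (one_ne_zero)).1 h).symm),
        if_neg hij]
  -- the main induction
  have main : ∀ (m : ℕ) (f : A) (α : Fin n →₀ ℕ), degS α ≤ m →
      coeffFst k A α (φ f) ∈
        Submodule.span k {g : A | ∃ l : List (Fin n), g = l.foldr (fun i x => Dop φ i x) f} := by
    intro m
    induction m with
    | zero =>
      intro f α hα
      have h0 : α = 0 := degS_eq_zero (by omega)
      subst h0
      rw [coeffFst_zero_eq, hφ1]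
      exact Submodule.subset_span ⟨[], rfl⟩
    | succ m ihm =>
      intro f α hα
      by_cases hm : degS α ≤ m
      · exact ihm f α hm
      have hdeg : degS α = m + 1 := by omega
      have hα0 : α ≠ 0 := by
        intro h; subst h
        have : degS (0 : Fin n →₀ ℕ) = 0 := Finsupp.sum_zero_index
        omega
      obtain ⟨i, β, hsplit, hdg2⟩ := exists_step hα0
      have hβm : degS β = m := by omega
      -- the coassociativity identity
      have hid := congrArg (((TensorProduct.lid k A).toLinearMap ∘ₗ
        TensorProduct.map (lcoeffMv k (Finsupp.single i 1)) (coeffFst k A β))) (hφ2 f)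
      rw [EL μ i β (φ f), ER φ i β (φ f)] at hid
      obtain ⟨S, hS0, hSL⟩ := expand (φ f)
      have hsum : coeffFst k A β (φ (Dop φ i f))
          = ∑ γ ∈ S, Phi μ i β (MvPolynomial.monomial γ 1) • coeffFst k A γ (φ f) := by
        rw [Dop, ← hid]
        exact hSL (Phi μ i β)
      have hPhi : ∀ γ, Phi μ i β (MvPolynomial.monomial γ 1)
          = MvPolynomial.coeff β (Lam i (ν (MvPolynomial.monomial γ 1))) := by
        intro γ
        rw [Lam, constantCoeff_pderiv, hνapp, ← bridgeB]
        rfl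
      have hkey : ∀ γ, degS β + 1 ≤ degS γ →
          Phi μ i β (MvPolynomial.monomial γ 1)
            = if γ = β + Finsupp.single i 1 then ((β i : k) + 1) else 0 := by
        intro γ h
        rw [hPhi]
        exact key_coeff ν hν1 i (fun j => hq0 i j) β γ h
      -- left-hand side is in the span
      have hL : coeffFst k A β (φ (Dop φ i f)) ∈
          Submodule.span k {g : A | ∃ l : List (Fin n),
            g = l.foldr (fun i x => Dop φ i x) f} := by
        have h1 := ihm (Dop φ i f) β (le_of_eq hβm)
        refine Submodule.span_le.2 ?_ h1
        rintro g ⟨l, rfl⟩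
        exact Submodule.subset_span ⟨l ++ [i], by rw [List.foldr_append]; rfl⟩
      by_cases hαS : α ∈ S
      · have hrest : ∑ γ ∈ S.erase α,
            Phi μ i β (MvPolynomial.monomial γ 1) • coeffFst k A γ (φ f) ∈
            Submodule.span k {g : A | ∃ l : List (Fin n),
              g = l.foldr (fun i x => Dop φ i x) f} := by
          refine Submodule.sum_mem _ fun γ hγ => ?_
          obtain ⟨hne, hγS⟩ := Finset.mem_erase.1 hγ
          by_cases hγm : degS γ ≤ m
          · exact Submodule.smul_mem _ _ (ihm f γ hγm)
          · have hge : degS β + 1 ≤ degS γ := by omega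
            rw [hkey γ hge, if_neg (by rw [← hsplit]; exact hne), zero_smul]
            exact Submodule.zero_mem _
        have hval : Phi μ i β (MvPolynomial.monomial α 1) = ((β i : k) + 1) := by
          rw [hkey α (by omega), if_pos hsplit]
        have hsplitsum :
            Phi μ i β (MvPolynomial.monomial α 1) • coeffFst k A α (φ f)
              + ∑ γ ∈ S.erase α,
                  Phi μ i β (MvPolynomial.monomial γ 1) • coeffFst k A γ (φ f)
            = ∑ γ ∈ S, Phi μ i β (MvPolynomial.monomial γ 1) • coeffFst k A γ (φ f) :=
          Finset.add_sum_erase S (fun γ => Phi μ i β (MvPolynomial.monomial γ 1) • coeffFst k A γ (φ f)) hαS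
        have hmem : ((β i : k) + 1) • coeffFst k A α (φ f) ∈
            Submodule.span k {g : A | ∃ l : List (Fin n),
              g = l.foldr (fun i x => Dop φ i x) f} := by
          have heq : ((β i : k) + 1) • coeffFst k A α (φ f)
              = coeffFst k A β (φ (Dop φ i f))
                - ∑ γ ∈ S.erase α,
                    Phi μ i β (MvPolynomial.monomial γ 1) • coeffFst k A γ (φ f) := by
            rw [hsum, ← hsplitsum, hval]
            ring
          rw [heq]
          exact Submodule.sub_mem _ hL hrest
        have hne0 : ((β i : k) + 1) ≠ 0 := by
          have : ((β i : ℕ) + 1 : ℕ) ≠ 0 := Nat.succ_ne_zero _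
          have h5 : (((β i : ℕ) + 1 : ℕ) : k) ≠ 0 := Nat.cast_ne_zero.2 this
          push_cast at h5
          exact h5
        have h6 := Submodule.smul_mem _ (((β i : k) + 1)⁻¹) hmem
        rw [smul_smul, inv_mul_cancel₀ hne0, one_smul] at h6
        exact h6
      · rw [hS0 α hαS]
        exact Submodule.zero_mem _
  exact main (degS α) f α le_rfl
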